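/- Let G be a finite abelian group and q : G → ℚ/ℤ a quadratic form (meaning b^q(x,y) := q(x+y) − q(x) − q(y) is biadditive). Let B be the kernel of the homomorphism G → Hom(G, ℚ/ℤ) adjoint to b^q, and define the normalized Gauss sum Γ(G,q) = |G|^{−1/2} Σ_{x∈G} e^{2πi q(x)}. If q vanishes on B then |Γ(G,q)| = |B|^{1/2}, and if q does not vanish on B then Γ(G,q) = 0. -/

import Mathlib

/-- The multiplicative pairing associated to a (multiplicatively written)
quadratic form `E : G → ℂ`, `E x = e^{2πi q(x)}`:
`b(x,y) = E(x+y)·E(x)⁻¹·E(y)⁻¹ = e^{2πi b^q(x,y)}`. -/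
noncomputable def qfPairing {G : Type*} [AddCommGroup G] (E : G → ℂ) (x y : G) : ℂ :=
  E (x + y) * (E x)⁻¹ * (E y)⁻¹

lemma char_sum_zero {H : Type*} [AddCommGroup H] [Fintype H] (χ : H → ℂ)
    (hχ : ∀ a b, χ (a + b) = χ a * χ b) (h : ∃ a, χ a ≠ 1) :
    ∑ x : H, χ x = 0 := by
  obtain ⟨a, ha⟩ := h
  have h1 : χ a * ∑ x : H, χ x = ∑ x : H, χ x := by
    rw [Finset.mul_sum]
    simp_rw [← hχ]
    exact Fintype.sum_equiv (Equiv.addLeft a) _ _ (fun x => rfl)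
  have h2 : (χ a - 1) * ∑ x : H, χ x = 0 := by linear_combination h1
  rcases mul_eq_zero.mp h2 with h | h
  · exact absurd (sub_eq_zero.mp h) ha
  · exact h

/-- Turaev's lemma on Gauss sums. Let `G` be a finite abelian group and
`q : G → ℚ/ℤ` a quadratic form, encoded by the unit-circle valued function
`E x = e^{2πi q(x)}` whose associated pairing `b(x,y) = E(x+y)E(x)⁻¹E(y)⁻¹` is
biadditive. Let `B` be the radical of the pairing. If `q(B) = 0` (i.e. `E = 1`
on `B`) then the normalized Gauss sum `Γ(G,q) = |G|^{-1/2} ∑ₓ E x` satisfies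
`|Γ(G,q)| = |B|^{1/2}`, i.e. `|∑ₓ E x|² = |G|·|B|`; and if `q` does not vanish
on `B` then `Γ(G,q) = 0`. -/
theorem turaev_gauss_sum {G : Type*} [AddCommGroup G] [Fintype G]
    (E : G → ℂ) (habs : ∀ x, ‖E x‖ = 1)
    (hbi : ∀ x y z : G,
      qfPairing E (x + y) z = qfPairing E x z * qfPairing E y z) :
    ((∀ x : G, (∀ y, qfPairing E x y = 1) → E x = 1) →
        ‖∑ x : G, E x‖ ^ 2 =
          (Fintype.card G : ℝ) *
            Nat.card {x : G // ∀ y, qfPairing E x y = 1}) ∧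
      ((∃ x : G, (∀ y, qfPairing E x y = 1) ∧ E x ≠ 1) →
        ∑ x : G, E x = 0) := by
  classical
  have hne : ∀ x, E x ≠ 0 := fun x h => by
    have := habs x; rw [h] at this; simp at this
  have hpne : ∀ x y, qfPairing E x y ≠ 0 := fun x y => by
    unfold qfPairing
    exact mul_ne_zero (mul_ne_zero (hne _) (inv_ne_zero (hne _))) (inv_ne_zero (hne _))
  have hsymm : ∀ x y, qfPairing E x y = qfPairing E y x := fun x y => by
    unfold qfPairing; rw [add_comm]; ring
  have hbi' : ∀ x y z, qfPairing E x (y + z) = qfPairing E x y * qfPairing E x z := by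
    intro x y z
    rw [hsymm, hbi, hsymm y x, hsymm z x]
  have hb0 : ∀ y, qfPairing E 0 y = 1 := by
    intro y
    have h := hbi 0 0 y
    rw [add_zero] at h
    have h2 : qfPairing E 0 y * qfPairing E 0 y = 1 * qfPairing E 0 y := by
      rw [one_mul]; exact h.symm
    exact mul_right_cancel₀ (hpne 0 y) h2
  have hE0 : E 0 = 1 := by
    have h := hb0 0
    unfold qfPairing at h
    rw [add_zero, mul_inv_cancel₀ (hne 0), one_mul] at h
    exact inv_eq_one.mp h
  have hconj : ∀ x, (starRingEnd ℂ) (E x) = (E x)⁻¹ := fun x =>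
    (Complex.inv_eq_conj (habs x)).symm
  set B : Set G := {x : G | ∀ y, qfPairing E x y = 1} with hBdef
  have hBadd : ∀ x x', x ∈ B → x' ∈ B → x + x' ∈ B := by
    intro x x' hx hx' y
    rw [hbi, hx y, hx' y, one_mul]
  have hBzero : (0 : G) ∈ B := hb0
  have hBneg : ∀ x, x ∈ B → -x ∈ B := by
    intro x hx y
    have h := hbi x (-x) y
    rw [add_neg_cancel, hb0, hx y, one_mul] at h
    exact h.symm
  have hEmulB : ∀ x x', x ∈ B → E (x + x') = E x * E x' := by
    intro x x' hx
    have h := hx x'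
    unfold qfPairing at h
    calc E (x + x') = (E (x + x') * (E x)⁻¹ * (E x')⁻¹) * (E x * E x') := by
          field_simp
          rw [mul_assoc, mul_div_assoc, div_self (mul_ne_zero (hne x) (hne x')), mul_one]
      _ = E x * E x' := by rw [h, one_mul]
  set S : ℂ := ∑ x : G, E x with hS
  have key : S * (starRingEnd ℂ) S =
      (Fintype.card G : ℂ) * ∑ z ∈ Finset.univ.filter (· ∈ B), E z := by
    rw [hS, map_sum]
    rw [Finset.sum_mul_sum]
    have step1 : ∀ y : G, ∑ x : G, E x * (starRingEnd ℂ) (E y)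
        = ∑ z : G, E z * qfPairing E z y := by
      intro y
      simp_rw [hconj]
      refine (Fintype.sum_equiv (Equiv.addLeft y)
        (fun z => E z * qfPairing E z y) (fun x => E x * (E y)⁻¹) (fun z => ?_)).symm
      show E z * qfPairing E z y = E (y + z) * (E y)⁻¹
      unfold qfPairing
      rw [add_comm z y]
      field_simp
      rw [mul_div_mul_left _ _ (hne z)]
    calc ∑ x : G, ∑ y : G, E x * (starRingEnd ℂ) (E y)
        = ∑ y : G, ∑ x : G, E x * (starRingEnd ℂ) (E y) := Finset.sum_comm
      _ = ∑ y : G, ∑ z : G, E z * qfPairing E z y :=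
          Finset.sum_congr rfl (fun y _ => step1 y)
      _ = ∑ z : G, ∑ y : G, E z * qfPairing E z y := Finset.sum_comm
      _ = ∑ z : G, E z * ∑ y : G, qfPairing E z y :=
          Finset.sum_congr rfl (fun z _ => (Finset.mul_sum _ _ _).symm)
      _ = ∑ z : G, E z * (if z ∈ B then (Fintype.card G : ℂ) else 0) := by
          refine Finset.sum_congr rfl (fun z _ => ?_)
          congr 1
          by_cases hz : z ∈ B
          · simp only [hz, if_true]
            rw [Finset.sum_congr rfl (fun y _ => hz y)]
            simp
          · simp only [hz, if_false]
            refine char_sum_zero _ (fun a b => hbi' z a b) ?_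
            by_contra hcon
            push_neg at hcon
            exact hz hcon
      _ = ∑ z ∈ Finset.univ.filter (· ∈ B), E z * (Fintype.card G : ℂ) := by
          rw [Finset.sum_filter]
          refine Finset.sum_congr rfl (fun z _ => ?_)
          by_cases hz : z ∈ B <;> simp [hz]
      _ = (Fintype.card G : ℂ) * ∑ z ∈ Finset.univ.filter (· ∈ B), E z := by
          rw [Finset.mul_sum]
          exact Finset.sum_congr rfl (fun z _ => mul_comm _ _)
  have hsubsum : ∑ z ∈ Finset.univ.filter (· ∈ B), E z
      = ∑ z : {x : G // ∀ y, qfPairing E x y = 1}, E z.1 :=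
    Finset.sum_subtype _ (by simp [hBdef]) E
  constructor
  · intro hvan
    have hsum1 : ∑ z ∈ Finset.univ.filter (· ∈ B), E z
        = (Nat.card {x : G // ∀ y, qfPairing E x y = 1} : ℂ) := by
      rw [hsubsum, Finset.sum_congr rfl (fun z _ => hvan z.1 z.2)]
      simp [Nat.card_eq_fintype_card]
    have key2 : ((‖S‖ ^ 2 : ℝ) : ℂ) =
        (((Fintype.card G : ℝ) * Nat.card {x : G // ∀ y, qfPairing E x y = 1} : ℝ) : ℂ) := by
      rw [Complex.sq_norm, ← Complex.mul_conj, key, hsum1]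
      push_cast
      ring
    exact_mod_cast key2
  · intro ⟨x0, hx0B, hx0ne⟩
    have hsum0 : ∑ z ∈ Finset.univ.filter (· ∈ B), E z = 0 := by
      set T : ℂ := ∑ z ∈ Finset.univ.filter (· ∈ B), E z with hT
      have hshift : E x0 * T = T := by
        rw [hT, Finset.mul_sum]
        simp_rw [← hEmulB x0 _ hx0B]
        refine Finset.sum_nbij' (fun z => x0 + z) (fun z => -x0 + z) ?_ ?_ ?_ ?_ ?_
        · intro a ha
          simp only [Finset.mem_filter, Finset.mem_univ, true_and] at ha ⊢
          exact hBadd _ _ hx0B ha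
        · intro a ha
          simp only [Finset.mem_filter, Finset.mem_univ, true_and] at ha ⊢
          exact hBadd _ _ (hBneg _ hx0B) ha
        · intro a _; exact neg_add_cancel_left _ _
        · intro a _; exact add_neg_cancel_left _ _
        · intro a _; rfl
      have h2 : (E x0 - 1) * T = 0 := by linear_combination hshift
      rcases mul_eq_zero.mp h2 with h | h
      · exact absurd (sub_eq_zero.mp h) hx0ne
      · exact h
    have hz : S * (starRingEnd ℂ) S = 0 := by rw [key, hsum0, mul_zero]
    rw [Complex.mul_conj] at hz
    have h0 : Complex.normSq S = 0 := by exact_mod_cast hz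
    exact Complex.normSq_eq_zero.mp h0
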